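/- Let λ = (λ_k) be a strictly increasing sequence of positive reals tending to infinity (with the convention λ_{-1} = 0). If x_n = f_{n+1}² for all n, then the sequence F̄_n(x) = (1/λ_n) ∑_{k=0}^{n} (λ_k − λ_{k-1}) ((f_k/f_{k+1}) x_k − (f_{k+1}/f_k) x_{k-1}) equals λ_0/λ_n for every n, and hence tends to 0 as n → ∞. -/

import Mathlib

open Filter Finset

noncomputable def fibR : ℕ → ℝ
  | 0 => 1
  | 1 => 1
  | (n + 2) => fibR (n + 1) + fibR n

noncomputable def Fhat (x : ℕ → ℝ) (n : ℕ) : ℝ :=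
  fibR n / fibR (n + 1) * x n - fibR (n + 1) / fibR n * (if n = 0 then 0 else x (n - 1))

noncomputable def Fbar (Λ : ℕ → ℝ) (x : ℕ → ℝ) (n : ℕ) : ℝ :=
  (1 / Λ n) * ∑ k ∈ Finset.range (n + 1),
    (Λ k - if k = 0 then 0 else Λ (k - 1)) *
      (fibR k / fibR (k + 1) * x k -
        fibR (k + 1) / fibR k * (if k = 0 then 0 else x (k - 1)))

lemma fibR_pos : ∀ n, 0 < fibR n
  | 0 => by simp [fibR]
  | 1 => by simp [fibR]
  | (n + 2) => by
      have h1 := fibR_pos (n + 1)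
      have h2 := fibR_pos n
      simp [fibR]; linarith

theorem fbar_of_fib_sq (Λ : ℕ → ℝ) (hmono : StrictMono Λ) (hpos : ∀ k, 0 < Λ k)
    (hlim : Tendsto Λ atTop atTop) (x : ℕ → ℝ) (hx : ∀ n, x n = fibR (n + 1) ^ 2) :
    (∀ n, Fbar Λ x n = Λ 0 / Λ n) ∧
      Tendsto (Fbar Λ x) atTop (nhds 0) := by
  have key : ∀ n, Fbar Λ x n = Λ 0 / Λ n := by
    intro n
    unfold Fbar
    rw [Finset.sum_eq_single 0]
    · simp [hx 0, fibR]; ring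
    · intro k hk hk0
      obtain ⟨m, rfl⟩ : ∃ m, k = m + 1 := ⟨k - 1, (Nat.succ_pred_eq_of_pos (Nat.pos_of_ne_zero hk0)).symm⟩
      have h1 := (fibR_pos (m + 1)).ne'
      have h2 := (fibR_pos (m + 2)).ne'
      simp [hx]
      right
      field_simp
      ring
    · intro h
      exact absurd (Finset.mem_range.mpr (Nat.succ_pos n)) h
  refine ⟨key, ?_⟩
  have : Tendsto (fun n => Λ 0 / Λ n) atTop (nhds 0) := by
    simpa [div_eq_mul_inv] using (hlim.inv_tendsto_atTop).const_mul (Λ 0)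
  exact this.congr fun n => (key n).symm
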